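/- Under the pro-rata dynamic model, let [p*] be the unique maximizer of ∑_{t=0}^{T−1} a_t 𝟙ᵀp(t) over all admissible sequences, where a_t = ∑_{j=0}^{T−t−1} α^j, and define p̄*(0) = p̄, w*(0) = 0, and for t ≥ 1: p̄*(t) = α^t p̄ − ∑_{k=0}^{t−1} α^{t−k} p*(k) and w*(t) = C(t−1) + ∑_{k=0}^{t−1}(Aᵀp*(k) − p*(k)). Then for each t ∈ {0,…,T−1}, p*(t) ≥ 0 satisfies the absolute priority fixed-point equation p*(t) = min(p̄*(t), c(t) + w*(t) + Aᵀp*(t)) (componentwise minimum). -/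

import Mathlib

open Matrix Finset

/-- A sequence `p(0), …, p(T-1)` of payment vectors is admissible in the pro-rata
dynamic model: for every `t < T`, `p(t) ≥ 0`,
`∑_{k=0}^t α^{t-k} p(k) ≤ α^t p̄`, and `C(t) + ∑_{k=0}^t (Aᵀp(k) - p(k)) ≥ 0`. -/
def AdmissibleVecSeq (n T : ℕ) (α : ℝ) (A : Matrix (Fin n) (Fin n) ℝ)
    (pbar : Fin n → ℝ) (c : ℕ → Fin n → ℝ) (p : ℕ → Fin n → ℝ) : Prop :=
  ∀ t < T,
    (∀ i, 0 ≤ p t i) ∧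
    (∀ i, ∑ k ∈ Finset.range (t + 1), α ^ (t - k) * p k i ≤ α ^ t * pbar i) ∧
    (∀ i, 0 ≤ (∑ k ∈ Finset.range (t + 1), c k i) +
      ∑ k ∈ Finset.range (t + 1), (Aᵀ.mulVec (p k) i - p k i))

/-- The coefficient `a_t = ∑_{j=0}^{T-t-1} α^j`. -/
def coeff (T : ℕ) (α : ℝ) (t : ℕ) : ℝ := ∑ j ∈ Finset.range (T - t), α ^ j

/-- The objective `∑_{t=0}^{T-1} a_t 𝟙ᵀ p(t)`. -/
def objVecSeq (n T : ℕ) (a : ℕ → ℝ) (p : ℕ → Fin n → ℝ) : ℝ :=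
  ∑ t ∈ Finset.range T, a t * ∑ i, p t i

/-- The residual nominal liabilities `p̄*(t) = α^t p̄ - ∑_{k<t} α^{t-k} p(k)`. -/
def nominalVec {n : ℕ} (α : ℝ) (pbar : Fin n → ℝ) (p : ℕ → Fin n → ℝ) (t : ℕ) :
    Fin n → ℝ :=
  fun i => α ^ t * pbar i - ∑ k ∈ Finset.range t, α ^ (t - k) * p k i

/-- The net worths `w*(t) = C(t-1) + ∑_{k<t} (Aᵀp(k) - p(k))`. -/
def worthVec {n : ℕ} (A : Matrix (Fin n) (Fin n) ℝ) (c : ℕ → Fin n → ℝ)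
    (p : ℕ → Fin n → ℝ) (t : ℕ) : Fin n → ℝ :=
  fun i => (∑ k ∈ Finset.range t, c k i) +
    ∑ k ∈ Finset.range t, (Aᵀ.mulVec (p k) i - p k i)

namespace Prorata

variable {n : ℕ} (α : ℝ) (A : Matrix (Fin n) (Fin n) ℝ)

/-- tail of a payment sequence -/
def tl (p : ℕ → Fin n → ℝ) : ℕ → Fin n → ℝ := fun t => p (t + 1)

/-- prepend a payment -/
def cons (x : Fin n → ℝ) (q : ℕ → Fin n → ℝ) : ℕ → Fin n → ℝ := fun t =>
  match t with
  | 0 => x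
  | (u + 1) => q u

@[simp] lemma cons_zero (x : Fin n → ℝ) (q : ℕ → Fin n → ℝ) : cons x q 0 = x := rfl
@[simp] lemma cons_succ (x : Fin n → ℝ) (q : ℕ → Fin n → ℝ) (u : ℕ) : cons x q (u+1) = q u := rfl
@[simp] lemma tl_cons (x : Fin n → ℝ) (q : ℕ → Fin n → ℝ) : tl (cons x q) = q := rfl
@[simp] lemma tl_apply (p : ℕ → Fin n → ℝ) (t : ℕ) : tl p t = p (t+1) := rfl

/-- residual nominal after paying x at time 0 -/
def resP (pbar x : Fin n → ℝ) : Fin n → ℝ := fun i => α * (pbar i - x i)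

/-- residual cash-flow sequence after paying x at time 0 -/
def resC (c : ℕ → Fin n → ℝ) (x : Fin n → ℝ) : ℕ → Fin n → ℝ := fun t =>
  match t with
  | 0 => fun i => c 1 i + (c 0 i + (Aᵀ.mulVec x i - x i))
  | (u + 1) => c (u + 2)

@[simp] lemma resC_zero (c : ℕ → Fin n → ℝ) (x : Fin n → ℝ) (i : Fin n) :
    resC A c x 0 i = c 1 i + (c 0 i + (Aᵀ.mulVec x i - x i)) := rfl
@[simp] lemma resC_succ (c : ℕ → Fin n → ℝ) (x : Fin n → ℝ) (u : ℕ) :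
    resC A c x (u+1) = c (u+2) := rfl

lemma mulVec_apply' (x : Fin n → ℝ) (i : Fin n) :
    Aᵀ.mulVec x i = ∑ j, A j i * x j := by
  simp [Matrix.mulVec, Matrix.transpose_apply, dotProduct]

lemma mulVec_mono (hA0 : ∀ i j, 0 ≤ A i j) {x y : Fin n → ℝ} (h : ∀ j, x j ≤ y j) :
    ∀ i, Aᵀ.mulVec x i ≤ Aᵀ.mulVec y i := by
  intro i
  rw [mulVec_apply', mulVec_apply']
  exact Finset.sum_le_sum fun j _ => mul_le_mul_of_nonneg_left (h j) (hA0 j i)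

lemma mulVec_nonneg (hA0 : ∀ i j, 0 ≤ A i j) {x : Fin n → ℝ} (h : ∀ j, 0 ≤ x j) :
    ∀ i, 0 ≤ Aᵀ.mulVec x i := by
  intro i
  rw [mulVec_apply']
  exact Finset.sum_nonneg fun j _ => mul_nonneg (hA0 j i) (h j)

lemma mulVec_sub' (x y : Fin n → ℝ) (i : Fin n) :
    Aᵀ.mulVec (fun j => x j - y j) i = Aᵀ.mulVec x i - Aᵀ.mulVec y i := by
  simp only [mulVec_apply', mul_sub, Finset.sum_sub_distrib]

lemma mulVec_smul' (a : ℝ) (x : Fin n → ℝ) (i : Fin n) :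
    Aᵀ.mulVec (fun j => a * x j) i = a * Aᵀ.mulVec x i := by
  simp only [mulVec_apply', Finset.mul_sum]
  congr 1; funext j; ring

/-- coefficient facts -/
lemma coeff_succ_succ (T t : ℕ) : coeff (T+1) α (t+1) = coeff T α t := by
  simp [coeff, Nat.succ_sub_succ]

lemma coeff_zero_succ (T : ℕ) : coeff (T+1) α 0 = 1 + α * coeff T α 0 := by
  simp only [coeff, Nat.sub_zero]
  rw [Finset.sum_range_succ' (fun j => α ^ j) T]
  simp [pow_succ, Finset.mul_sum, add_comm, mul_comm]

lemma coeff_zero_nonneg (hα : 1 ≤ α) (T : ℕ) : 0 ≤ coeff T α 0 := by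
  apply Finset.sum_nonneg
  intro j _
  positivity

lemma obj_split (T : ℕ) (p : ℕ → Fin n → ℝ) :
    objVecSeq n (T+1) (coeff (T+1) α) p
      = coeff (T+1) α 0 * (∑ i, p 0 i) + objVecSeq n T (coeff T α) (tl p) := by
  unfold objVecSeq
  rw [Finset.sum_range_succ' (fun t => coeff (T+1) α t * ∑ i, p t i) T]
  simp only [coeff_succ_succ, tl_apply]
  ring

lemma liab_shift (p : ℕ → Fin n → ℝ) (t : ℕ) (i : Fin n) :
    ∑ k ∈ Finset.range (t + 2), α ^ (t + 1 - k) * p k i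
      = α ^ (t+1) * p 0 i + ∑ k ∈ Finset.range (t + 1), α ^ (t - k) * p (k+1) i := by
  rw [Finset.sum_range_succ' (fun k => α ^ (t + 1 - k) * p k i) (t+1)]
  simp only [Nat.succ_sub_succ, Nat.sub_zero]
  ring

lemma resC_sum (c : ℕ → Fin n → ℝ) (x : Fin n → ℝ) (m : ℕ) (i : Fin n) :
    ∑ k ∈ Finset.range (m + 1), resC A c x k i
      = (∑ k ∈ Finset.range (m + 2), c k i) + (Aᵀ.mulVec x i - x i) := by
  rw [Finset.sum_range_succ' (fun k => resC A c x k i) m]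
  rw [Finset.sum_range_succ' (fun k => c k i) (m+1)]
  rw [Finset.sum_range_succ' (fun k => c (k+1) i) m]
  simp only [resC_succ, resC_zero]
  ring

lemma cash_shift (c : ℕ → Fin n → ℝ) (p : ℕ → Fin n → ℝ) (t : ℕ) (i : Fin n) :
    (∑ k ∈ Finset.range (t + 2), c k i) +
      ∑ k ∈ Finset.range (t + 2), (Aᵀ.mulVec (p k) i - p k i)
    = (∑ k ∈ Finset.range (t + 1), resC A c (p 0) k i) +
      ∑ k ∈ Finset.range (t + 1), (Aᵀ.mulVec (tl p k) i - tl p k i) := by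
  rw [resC_sum]
  rw [Finset.sum_range_succ' (fun k => Aᵀ.mulVec (p k) i - p k i) (t+1)]
  simp only [tl_apply]
  ring

lemma tail_admissible {T : ℕ} {pbar : Fin n → ℝ} {c : ℕ → Fin n → ℝ} {p : ℕ → Fin n → ℝ}
    (h : AdmissibleVecSeq n (T+1) α A pbar c p) :
    AdmissibleVecSeq n T α A (resP α pbar (p 0)) (resC A c (p 0)) (tl p) := by
  intro t ht
  obtain ⟨h1, h2, h3⟩ := h (t+1) (by omega)
  refine ⟨fun i => h1 i, fun i => ?_, fun i => ?_⟩
  · have := h2 i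
    rw [liab_shift] at this
    have h2' : ∑ k ∈ Finset.range (t + 1), α ^ (t - k) * p (k+1) i
        ≤ α ^ (t+1) * pbar i - α ^ (t+1) * p 0 i := by linarith
    calc ∑ k ∈ Finset.range (t + 1), α ^ (t - k) * tl p k i
        = ∑ k ∈ Finset.range (t + 1), α ^ (t - k) * p (k+1) i := rfl
      _ ≤ α ^ (t+1) * pbar i - α ^ (t+1) * p 0 i := h2'
      _ = α ^ t * resP α pbar (p 0) i := by
          simp only [resP, pow_succ]
          ring
  · have := h3 i
    rw [cash_shift] at this
    exact this

lemma glue_admissible {T : ℕ} {pbar : Fin n → ℝ} {c : ℕ → Fin n → ℝ}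
    {x : Fin n → ℝ} {q : ℕ → Fin n → ℝ}
    (hx0 : ∀ i, 0 ≤ x i) (hxp : ∀ i, x i ≤ pbar i)
    (hxc : ∀ i, 0 ≤ c 0 i + (Aᵀ.mulVec x i - x i))
    (hq : AdmissibleVecSeq n T α A (resP α pbar x) (resC A c x) q) :
    AdmissibleVecSeq n (T+1) α A pbar c (cons x q) := by
  intro t ht
  match t with
  | 0 =>
    refine ⟨fun i => hx0 i, fun i => ?_, fun i => ?_⟩
    · simpa using hxp i
    · simpa using hxc i
  | (u+1) =>
    have hu : u < T := by omega
    obtain ⟨h1, h2, h3⟩ := hq u hu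
    refine ⟨fun i => by simpa using h1 i, fun i => ?_, fun i => ?_⟩
    · have := h2 i
      rw [liab_shift α (cons x q) u i]
      have e1 : ∀ k, cons x q (k+1) = q k := fun k => rfl
      simp only [e1, cons_zero]
      have : ∑ k ∈ Finset.range (u + 1), α ^ (u - k) * q k i
          ≤ α ^ u * (α * (pbar i - x i)) := h2 i
      calc α ^ (u+1) * x i + ∑ k ∈ Finset.range (u + 1), α ^ (u - k) * q k i
          ≤ α ^ (u+1) * x i + α ^ u * (α * (pbar i - x i)) := by linarith
        _ = α ^ (u+1) * pbar i := by rw [pow_succ]; ring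
    · have := h3 i
      rw [cash_shift A c (cons x q) u i]
      simpa using this


lemma exists_fixed (lo hi : Fin n → ℝ) (hlohi : lo ≤ hi)
    (F : (Fin n → ℝ) → (Fin n → ℝ))
    (hmono : ∀ x y, x ≤ y → F x ≤ F y)
    (hmap : ∀ x, lo ≤ x → x ≤ hi → lo ≤ F x ∧ F x ≤ hi) :
    ∃ x, F x = x ∧ lo ≤ x ∧ x ≤ hi := by
  haveI := Fact.mk hlohi
  let G : Set.Icc lo hi →o Set.Icc lo hi :=
    ⟨fun x => ⟨F x.1, (hmap x.1 x.2.1 x.2.2).1, (hmap x.1 x.2.1 x.2.2).2⟩,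
     fun x y hxy => by
       simp only [Subtype.mk_le_mk]
       exact hmono x.1 y.1 hxy⟩
  refine ⟨(OrderHom.lfp G).1, ?_, (OrderHom.lfp G).2.1, (OrderHom.lfp G).2.2⟩
  exact congrArg Subtype.val (OrderHom.map_lfp G)

lemma S4 (hα : 1 ≤ α) (hA0 : ∀ i j, 0 ≤ A i j) :
    ∀ (T : ℕ) (pbar1 : Fin n → ℝ) (c1 : ℕ → Fin n → ℝ) (Δ : Fin n → ℝ)
      (SA : Fin n → Prop) (c20 : Fin n → ℝ),
    (∀ t < T, ∀ i, 0 ≤ c1 t i) →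
    (∀ j, 0 ≤ Δ j) →
    (∀ j, α * Δ j ≤ pbar1 j) →
    (∀ j, SA j → α * Δ j = pbar1 j) →
    (∀ j, ¬ SA j → 0 ≤ Δ j - Aᵀ.mulVec Δ j) →
    (0 < T → (∀ j, 0 ≤ c20 j) ∧ (∀ j, ¬ SA j → c1 0 j - (Δ j - Aᵀ.mulVec Δ j) ≤ c20 j)) →
    ∀ r, AdmissibleVecSeq n T α A pbar1 c1 r →
    ∃ r2, AdmissibleVecSeq n T α A (fun i => pbar1 i - α * Δ i) (Function.update c1 0 c20) r2 ∧
      objVecSeq n T (coeff T α) r - (α * coeff T α 0) * (∑ j, Δ j)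
        ≤ objVecSeq n T (coeff T α) r2 := by
  intro T
  induction T with
  | zero =>
    intro pbar1 c1 Δ SA c20 _ _ _ _ _ _ r _
    refine ⟨r, fun t ht => absurd ht (by omega), ?_⟩
    simp [objVecSeq, coeff]
  | succ T IH =>
    intro pbar1 c1 Δ SA c20 hc1 hΔ0 hΔp hSAeq hB hguard r hr
    classical
    obtain ⟨hg1, hg2⟩ := hguard (Nat.succ_pos T)
    obtain ⟨hr0nonneg, hr0liab, hr0cash⟩ := hr 0 (Nat.succ_pos T)
    have hr0pbar : ∀ i, r 0 i ≤ pbar1 i := by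
      intro i; have := hr0liab i; simpa using this
    have hcash1 : ∀ i, 0 ≤ c1 0 i + (Aᵀ.mulVec (r 0) i - r 0 i) := by
      intro i; have := hr0cash i; simpa using this
    have hαpos : (0:ℝ) ≤ α := le_trans zero_le_one hα
    -- the cut fixed point
    obtain ⟨d, hdfix, hd0, hdr⟩ := exists_fixed (fun _ => 0) (r 0)
      (fun i => hr0nonneg i)
      (fun d j => if SA j then r 0 j
        else max (max 0 (r 0 j + α * Δ j - pbar1 j))
          (min (r 0 j) (min (α * Δ j)
            (α * (Δ j - Aᵀ.mulVec Δ j) + Aᵀ.mulVec d j))))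
      (by
        intro x y hxy j
        dsimp only
        split
        · exact le_rfl
        · have hAm := mulVec_mono A hA0 (fun m => hxy m) j
          exact max_le_max le_rfl (min_le_min le_rfl (min_le_min le_rfl (by linarith))))
      (by
        intro x hx0 hxr
        constructor
        · intro j
          dsimp only
          split
          · exact hr0nonneg j
          · exact le_trans (le_max_left 0 _) (le_max_left _ _)
        · intro j
          dsimp only
          split
          · exact le_rfl
          · exact max_le (max_le (hr0nonneg j) (by linarith [hΔp j])) (min_le_left _ _))
    have hdj : ∀ j, d j = if SA j then r 0 j
        else max (max 0 (r 0 j + α * Δ j - pbar1 j))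
          (min (r 0 j) (min (α * Δ j)
            (α * (Δ j - Aᵀ.mulVec Δ j) + Aᵀ.mulVec d j))) :=
      fun j => (congrFun hdfix j).symm
    have hd0' : ∀ j, 0 ≤ d j := fun j => hd0 j
    have hdr' : ∀ j, d j ≤ r 0 j := fun j => hdr j
    have hdαΔ : ∀ j, d j ≤ α * Δ j := by
      intro j
      rw [hdj j]
      split
      · have := hSAeq j (by assumption); linarith [hr0pbar j]
      · refine max_le (max_le (mul_nonneg hαpos (hΔ0 j)) (by linarith [hr0pbar j])) ?_
        exact le_trans (min_le_right _ _) (min_le_left _ _)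
    have hAd : ∀ j, Aᵀ.mulVec d j ≤ α * Aᵀ.mulVec Δ j := by
      intro j
      rw [← mulVec_smul' A α Δ j]
      exact mulVec_mono A hA0 (fun m => hdαΔ m) j
    have hAdnn : ∀ j, 0 ≤ Aᵀ.mulVec d j := mulVec_nonneg A hA0 hd0'
    have hdL : ∀ j, r 0 j + α * Δ j - pbar1 j ≤ d j := by
      intro j
      rw [hdj j]
      split
      · have := hSAeq j (by assumption); linarith
      · exact le_trans (le_max_right 0 _) (le_max_left _ _)
    have K1 : ∀ j, ¬ SA j → d j = r 0 j ∨
        α * (Δ j - Aᵀ.mulVec Δ j) ≤ d j - Aᵀ.mulVec d j := by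
      intro j hSA
      have e : d j = max (max 0 (r 0 j + α * Δ j - pbar1 j))
          (min (r 0 j) (min (α * Δ j) (α * (Δ j - Aᵀ.mulVec Δ j) + Aᵀ.mulVec d j))) := by
        rw [hdj j, if_neg hSA]
      have hms : α * (Δ j - Aᵀ.mulVec Δ j) = α * Δ j - α * Aᵀ.mulVec Δ j := mul_sub α _ _
      have hαh : α * (Δ j - Aᵀ.mulVec Δ j) + Aᵀ.mulVec d j ≤ α * Δ j := by
        linarith [hAd j]
      rcases le_total (r 0 j)
          (min (α * Δ j) (α * (Δ j - Aᵀ.mulVec Δ j) + Aᵀ.mulVec d j)) with hc | hc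
      · left
        have hL : max 0 (r 0 j + α * Δ j - pbar1 j) ≤ r 0 j :=
          max_le (hr0nonneg j) (by linarith [hΔp j])
        rw [e, min_eq_left hc, max_eq_right hL]
      · right
        have h2 : α * (Δ j - Aᵀ.mulVec Δ j) + Aᵀ.mulVec d j ≤ d j := by
          rw [e, min_eq_right hc, min_eq_right hαh]
          exact le_max_right _ _
        linarith
    have K2 : ∀ j, ¬ SA j → d j ≤ α * (Δ j - Aᵀ.mulVec Δ j) + Aᵀ.mulVec d j ∨
        d j = r 0 j + α * Δ j - pbar1 j := by
      intro j hSA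
      have e : d j = max (max 0 (r 0 j + α * Δ j - pbar1 j))
          (min (r 0 j) (min (α * Δ j) (α * (Δ j - Aᵀ.mulVec Δ j) + Aᵀ.mulVec d j))) := by
        rw [hdj j, if_neg hSA]
      rcases le_total (max 0 (r 0 j + α * Δ j - pbar1 j))
          (min (r 0 j) (min (α * Δ j) (α * (Δ j - Aᵀ.mulVec Δ j) + Aᵀ.mulVec d j))) with hc | hc
      · left
        calc d j = _ := by rw [e, max_eq_right hc]
          _ ≤ _ := le_trans (min_le_right _ _) (min_le_right _ _)
      · have e' : d j = max 0 (r 0 j + α * Δ j - pbar1 j) := by rw [e, max_eq_left hc]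
        rcases le_total (r 0 j + α * Δ j - pbar1 j) 0 with hw | hw
        · left
          have hz : d j = 0 := by rw [e', max_eq_left hw]
          rw [hz]
          exact add_nonneg (mul_nonneg hαpos (hB j hSA)) (hAdnn j)
        · right
          rw [e', max_eq_right hw]
    -- second level data
    have C2 : ∀ j, 0 ≤ c20 j + (Aᵀ.mulVec (fun m => r 0 m - d m) j - (r 0 j - d j)) := by
      intro j
      have hsub : Aᵀ.mulVec (fun m => r 0 m - d m) j
          = Aᵀ.mulVec (r 0) j - Aᵀ.mulVec d j := mulVec_sub' A (r 0) d j
      have hnn : 0 ≤ Aᵀ.mulVec (fun m => r 0 m - d m) j :=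
        mulVec_nonneg A hA0 (fun m => sub_nonneg.mpr (hdr' m)) j
      by_cases hSA : SA j
      · have hd : d j = r 0 j := by rw [hdj j, if_pos hSA]
        have : r 0 j - d j = 0 := by rw [hd]; ring
        linarith [hg1 j]
      · rcases K1 j hSA with hd | hz
        · have : r 0 j - d j = 0 := by rw [hd]; ring
          linarith [hg1 j]
        · have h1 := hg2 j hSA
          have h2 := hcash1 j
          have h3 := hB j hSA
          have hms : α * (Δ j - Aᵀ.mulVec Δ j) = α * Δ j - α * Aᵀ.mulVec Δ j := mul_sub α _ _
          have e2 : (Δ j - Aᵀ.mulVec Δ j) ≤ α * (Δ j - Aᵀ.mulVec Δ j) := by nlinarith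
          rw [hsub]
          linarith
    -- apply IH
    obtain ⟨r2t, hr2tadm, hr2tobj⟩ :=
      IH (resP α pbar1 (r 0)) (resC A c1 (r 0)) (fun j => α * Δ j - d j)
        (fun j => SA j ∨ d j = r 0 j + α * Δ j - pbar1 j)
        (fun j => c1 1 j + (c20 j + (Aᵀ.mulVec (fun m => r 0 m - d m) j - (r 0 j - d j))))
        (by
          intro t ht i
          match t with
          | 0 =>
            have h1 : 0 ≤ c1 1 i := hc1 1 (by omega) i
            have h2 := hcash1 i
            simp only [resC_zero]
            linarith
          | (u+1) =>
            simp only [resC_succ]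
            exact hc1 (u+2) (by omega) i)
        (fun j => by linarith [hdαΔ j]) -- Δ'' ≥ 0
        (by
          intro j
          dsimp only [resP]
          have := hdL j
          nlinarith)
        (by
          rintro j (hS | he)
          · have hd : d j = r 0 j := by rw [hdj j, if_pos hS]
            have h2 := hSAeq j hS
            dsimp only [resP]
            rw [hd, ← h2]
          · dsimp only [resP]
            rw [he]
            ring)
        (by
          intro j hj
          have hS : ¬ SA j := fun h => hj (Or.inl h)
          have hne : d j ≠ r 0 j + α * Δ j - pbar1 j := fun h => hj (Or.inr h)
          have hz : d j ≤ α * (Δ j - Aᵀ.mulVec Δ j) + Aᵀ.mulVec d j :=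
            (K2 j hS).resolve_right hne
          have eA : Aᵀ.mulVec (fun m => α * Δ m - d m) j
              = α * Aᵀ.mulVec Δ j - Aᵀ.mulVec d j := by
            rw [mulVec_sub' A (fun m => α * Δ m) d j, mulVec_smul' A α Δ j]
          rw [eA]
          have hms : α * (Δ j - Aᵀ.mulVec Δ j) = α * Δ j - α * Aᵀ.mulVec Δ j := mul_sub α _ _
          show 0 ≤ α * Δ j - d j - (α * Aᵀ.mulVec Δ j - Aᵀ.mulVec d j)
          linarith)
        (by
          intro hT
          constructor
          · intro j
            have h1 : 0 ≤ c1 1 j := hc1 1 (by omega) j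
            linarith [C2 j]
          · intro j hj
            have hS : ¬ SA j := fun h => hj (Or.inl h)
            have hne : d j ≠ r 0 j + α * Δ j - pbar1 j := fun h => hj (Or.inr h)
            have hz : d j ≤ α * (Δ j - Aᵀ.mulVec Δ j) + Aᵀ.mulVec d j :=
              (K2 j hS).resolve_right hne
            have eA : Aᵀ.mulVec (fun m => α * Δ m - d m) j
                = α * Aᵀ.mulVec Δ j - Aᵀ.mulVec d j := by
              rw [mulVec_sub' A (fun m => α * Δ m) d j, mulVec_smul' A α Δ j]
            have eB : Aᵀ.mulVec (fun m => r 0 m - d m) j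
                = Aᵀ.mulVec (r 0) j - Aᵀ.mulVec d j := mulVec_sub' A (r 0) d j
            have hg2' := hg2 j hS
            have hB' := hB j hS
            have e2 : (Δ j - Aᵀ.mulVec Δ j) ≤ α * (Δ j - Aᵀ.mulVec Δ j) := by nlinarith
            have hms : α * (Δ j - Aᵀ.mulVec Δ j) = α * Δ j - α * Aᵀ.mulVec Δ j := mul_sub α _ _
            simp only [resC_zero]
            rw [eA, eB]
            linarith)
        (tl r) (tail_admissible α A hr)
    have epbar : (fun i => resP α pbar1 (r 0) i - α * (α * Δ i - d i))
        = resP α (fun i => pbar1 i - α * Δ i) (fun m => r 0 m - d m) := by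
      funext i; simp only [resP]; ring
    have ec : Function.update (resC A c1 (r 0)) 0
          (fun j => c1 1 j + (c20 j + (Aᵀ.mulVec (fun m => r 0 m - d m) j - (r 0 j - d j))))
        = resC A (Function.update c1 0 c20) (fun m => r 0 m - d m) := by
      funext t i
      match t with
      | 0 =>
        rw [Function.update_self]
        simp only [resC_zero, Function.update_self,
          Function.update_of_ne (by norm_num : (1:ℕ) ≠ 0)]
      | (u+1) =>
        rw [Function.update_of_ne (Nat.succ_ne_zero u)]
        simp only [resC_succ,
          Function.update_of_ne (by omega : u + 2 ≠ 0)]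
    rw [epbar, ec] at hr2tadm
    refine ⟨cons (fun m => r 0 m - d m) r2t,
      glue_admissible α A (fun i => by linarith [hdr' i]) (fun i => by linarith [hdL i])
        (fun i => by simpa using C2 i) hr2tadm, ?_⟩
    -- objective accounting
    rw [obj_split α T (cons (fun m => r 0 m - d m) r2t), obj_split α T r]
    simp only [cons_zero, tl_cons]
    have hsplit : ∑ i, (r 0 i - d i) = ∑ i, r 0 i - ∑ i, d i := Finset.sum_sub_distrib _ _
    have hΔs : ∑ j, (α * Δ j - d j) = α * (∑ j, Δ j) - ∑ j, d j := by
      rw [Finset.sum_sub_distrib, Finset.mul_sum]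
    rw [hΔs] at hr2tobj
    have hds : ∑ j, d j ≤ α * ∑ j, Δ j := by
      rw [Finset.mul_sum]
      exact Finset.sum_le_sum (fun j _ => hdαΔ j)
    have hA1 : coeff (T+1) α 0 = 1 + α * coeff T α 0 := coeff_zero_succ α T
    have ha0 : 0 ≤ coeff T α 0 := coeff_zero_nonneg α hα T
    rw [hsplit, hA1]
    nlinarith [hr2tobj, hds]



lemma nominal_shift (pbar : Fin n → ℝ) (p : ℕ → Fin n → ℝ) (t' : ℕ) (i : Fin n) :
    nominalVec α (resP α pbar (p 0)) (tl p) t' i = nominalVec α pbar p (t'+1) i := by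
  unfold nominalVec
  rw [Finset.sum_range_succ' (fun k => α ^ (t' + 1 - k) * p k i) t']
  simp only [Nat.succ_sub_succ, Nat.sub_zero, tl_apply, resP, pow_succ]
  ring

lemma worth_shift (c : ℕ → Fin n → ℝ) (p : ℕ → Fin n → ℝ) (t' : ℕ) (i : Fin n) :
    resC A c (p 0) t' i + worthVec A (resC A c (p 0)) (tl p) t' i
      = c (t'+1) i + worthVec A c p (t'+1) i := by
  unfold worthVec
  have e2 := resC_sum A c (p 0) t' i
  have e5 : ∑ k ∈ Finset.range (t'+1), resC A c (p 0) k i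
      = (∑ k ∈ Finset.range t', resC A c (p 0) k i) + resC A c (p 0) t' i :=
    Finset.sum_range_succ _ t'
  have e3 : ∑ k ∈ Finset.range (t'+1), (Aᵀ.mulVec (p k) i - p k i)
      = (∑ k ∈ Finset.range t', (Aᵀ.mulVec (tl p k) i - tl p k i))
        + (Aᵀ.mulVec (p 0) i - p 0 i) := by
    rw [Finset.sum_range_succ' (fun k => Aᵀ.mulVec (p k) i - p k i) t']
    rfl
  have e4 : ∑ k ∈ Finset.range (t'+1+1), c k i
      = ∑ k ∈ Finset.range (t'+1), c k i + c (t'+1) i := Finset.sum_range_succ _ _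
  rw [e5] at e2
  rw [e3]
  linarith

lemma MAIN (hα : 1 ≤ α) (hA0 : ∀ i j, 0 ≤ A i j) :
    ∀ (T : ℕ) (pbar : Fin n → ℝ) (c : ℕ → Fin n → ℝ),
    (∀ t < T, ∀ i, 0 ≤ c t i) →
    ∀ p, AdmissibleVecSeq n T α A pbar c p →
    (∀ q, AdmissibleVecSeq n T α A pbar c q →
      objVecSeq n T (coeff T α) q ≤ objVecSeq n T (coeff T α) p) →
    ∀ t < T, (∀ i, 0 ≤ p t i) ∧
      (∀ i, p t i = min (nominalVec α pbar p t i)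
        (c t i + worthVec A c p t i + Aᵀ.mulVec (p t) i)) := by
  intro T
  induction T with
  | zero => intro pbar c _ p _ _ t ht; omega
  | succ T IH =>
    intro pbar c hc p hadm hopt t ht
    classical
    have hαpos : (0:ℝ) ≤ α := le_trans zero_le_one hα
    obtain ⟨h0nonneg, h0liab, h0cash⟩ := hadm 0 (Nat.succ_pos T)
    have h0pbar : ∀ i, p 0 i ≤ pbar i := fun i => by simpa using h0liab i
    have h0c : ∀ i, 0 ≤ c 0 i + (Aᵀ.mulVec (p 0) i - p 0 i) := fun i => by simpa using h0cash i
    have hc1 : ∀ u < T, ∀ i, 0 ≤ resC A c (p 0) u i := by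
      intro u hu i
      match u with
      | 0 =>
        have h1 : 0 ≤ c 1 i := hc 1 (by omega) i
        simp only [resC_zero]
        linarith [h0c i]
      | (v+1) =>
        simp only [resC_succ]
        exact hc (v+2) (by omega) i
    cases t with
    | zero =>
      refine ⟨h0nonneg, fun i => ?_⟩
      have en : nominalVec α pbar p 0 i = pbar i := by simp [nominalVec]
      have ew : worthVec A c p 0 i = 0 := by simp [worthVec]
      rw [en, ew]
      by_contra hne
      have hle : p 0 i ≤ min (pbar i) (c 0 i + 0 + Aᵀ.mulVec (p 0) i) :=
        le_min (h0pbar i) (by linarith [h0c i])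
      have hlt : p 0 i < min (pbar i) (c 0 i + Aᵀ.mulVec (p 0) i) := by
        have h' : (c 0 i + 0 + Aᵀ.mulVec (p 0) i) = c 0 i + Aᵀ.mulVec (p 0) i := by ring
        rw [h'] at hle hne
        exact lt_of_le_of_ne hle hne
      -- clearing fixed point above p 0
      obtain ⟨x, hxfix, hxlo, hxhi⟩ := exists_fixed (p 0) pbar (fun i => h0pbar i)
        (fun y j => min (pbar j) (c 0 j + Aᵀ.mulVec y j))
        (by
          intro y z hyz j
          dsimp only
          exact min_le_min le_rfl (by linarith [mulVec_mono A hA0 (fun m => hyz m) j]))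
        (by
          intro y hy0 hyp
          constructor
          · intro j
            dsimp only
            refine le_min (h0pbar j) ?_
            have := mulVec_mono A hA0 (fun m => hy0 m) j
            linarith [h0c j]
          · intro j
            dsimp only
            exact min_le_left _ _)
      have hxj : ∀ j, x j = min (pbar j) (c 0 j + Aᵀ.mulVec x j) :=
        fun j => (congrFun hxfix j).symm
      have hxcash : ∀ j, x j ≤ c 0 j + Aᵀ.mulVec x j :=
        fun j => le_of_eq_of_le (hxj j) (min_le_right _ _)
      have hxFp0 : ∀ j, min (pbar j) (c 0 j + Aᵀ.mulVec (p 0) j) ≤ x j := by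
        intro j
        have h1 : min (pbar j) (c 0 j + Aᵀ.mulVec (p 0) j)
            ≤ min (pbar j) (c 0 j + Aᵀ.mulVec x j) :=
          min_le_min le_rfl (by linarith [mulVec_mono A hA0 (fun m => hxlo m) j])
        exact le_of_le_of_eq h1 (hxj j).symm
      have hxgt : p 0 i < x i := lt_of_lt_of_le hlt (hxFp0 i)
      have hxB : ∀ j, ¬ (x j = pbar j) → x j = c 0 j + Aᵀ.mulVec x j := by
        intro j hj
        rcases min_cases (pbar j) (c 0 j + Aᵀ.mulVec x j) with ⟨he, _⟩ | ⟨he, _⟩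
        · exact absurd (by rw [hxj j, he]) hj
        · rw [hxj j, he]
      -- apply S4
      obtain ⟨r2, hr2adm, hr2obj⟩ := S4 α A hα hA0 T
        (resP α pbar (p 0)) (resC A c (p 0)) (fun j => x j - p 0 j)
        (fun j => x j = pbar j)
        (fun j => c 1 j + (c 0 j + (Aᵀ.mulVec x j - x j)))
        hc1
        (fun j => sub_nonneg.mpr (hxlo j))
        (by
          intro j
          dsimp only [resP]
          have := hxhi j
          nlinarith)
        (by
          intro j hS
          dsimp only [resP]
          rw [hS])
        (by
          intro j hS
          have hB' := hxB j hS
          have eS : Aᵀ.mulVec (fun m => x m - p 0 m) j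
              = Aᵀ.mulVec x j - Aᵀ.mulVec (p 0) j := mulVec_sub' A x (p 0) j
          rw [eS]
          linarith [h0c j])
        (by
          intro hT
          constructor
          · intro j
            have h1 : 0 ≤ c 1 j := hc 1 (by omega) j
            show 0 ≤ c 1 j + (c 0 j + (Aᵀ.mulVec x j - x j))
            linarith [hxcash j]
          · intro j hS
            have hB' := hxB j hS
            have eS : Aᵀ.mulVec (fun m => x m - p 0 m) j
                = Aᵀ.mulVec x j - Aᵀ.mulVec (p 0) j := mulVec_sub' A x (p 0) j
            simp only [resC_zero]
            rw [eS]
            linarith [hxcash j])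
        (tl p) (tail_admissible α A hadm)
      have epbar : (fun j => resP α pbar (p 0) j - α * (x j - p 0 j)) = resP α pbar x := by
        funext j; simp only [resP]; ring
      have ec : Function.update (resC A c (p 0)) 0
            (fun j => c 1 j + (c 0 j + (Aᵀ.mulVec x j - x j))) = resC A c x := by
        funext u j
        match u with
        | 0 =>
          rw [Function.update_self]
          simp only [resC_zero]
        | (v+1) =>
          rw [Function.update_of_ne (Nat.succ_ne_zero v)]
          simp only [resC_succ]
      rw [epbar, ec] at hr2adm
      have hq := glue_admissible α A (fun j => le_trans (h0nonneg j) (hxlo j)) (fun j => hxhi j)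
        (fun j => by linarith [hxcash j]) hr2adm
      have hcmp := hopt _ hq
      rw [obj_split α T (cons x r2), obj_split α T p] at hcmp
      simp only [cons_zero, tl_cons] at hcmp
      have hΔsum : 0 < ∑ j, (x j - p 0 j) := by
        refine Finset.sum_pos' (fun j _ => sub_nonneg.mpr (hxlo j)) ⟨i, Finset.mem_univ i, ?_⟩
        linarith
      have hsx : ∑ j, x j = ∑ j, p 0 j + ∑ j, (x j - p 0 j) := by
        rw [← Finset.sum_add_distrib]
        congr 1; funext j; ring
      have hA1 : coeff (T+1) α 0 = 1 + α * coeff T α 0 := coeff_zero_succ α T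
      have ha0 : 0 ≤ coeff T α 0 := coeff_zero_nonneg α hα T
      rw [hsx, hA1] at hcmp
      nlinarith [hr2obj, hΔsum, hcmp]
    | succ t' =>
      have hadm' := tail_admissible α A hadm
      have hopt' : ∀ q, AdmissibleVecSeq n T α A (resP α pbar (p 0)) (resC A c (p 0)) q →
          objVecSeq n T (coeff T α) q ≤ objVecSeq n T (coeff T α) (tl p) := by
        intro q hq
        have hglue := glue_admissible α A h0nonneg h0pbar h0c hq
        have h2 := hopt _ hglue
        rw [obj_split α T (cons (p 0) q), obj_split α T p] at h2
        simp only [cons_zero, tl_cons] at h2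
        linarith
      obtain ⟨ih1, ih2⟩ := IH (resP α pbar (p 0)) (resC A c (p 0)) hc1 (tl p) hadm' hopt'
        t' (by omega)
      refine ⟨fun i => ih1 i, fun i => ?_⟩
      have h3 := ih2 i
      rw [nominal_shift α pbar p t' i, worth_shift A c p t' i] at h3
      exact h3

end Prorata

/-- In the pro-rata dynamic model, the optimal sequence `[p*]` satisfies, at every period
`t < T`, `p*(t) ≥ 0` and the absolute priority fixed-point equation
`p*(t) = min(p̄*(t), c(t) + w*(t) + Aᵀp*(t))` componentwise. -/
theorem prorata_dynamic_fixed_point (n T : ℕ) (hn : 1 ≤ n) (hT : 1 ≤ T)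
    (α : ℝ) (hα : 1 ≤ α)
    (A : Matrix (Fin n) (Fin n) ℝ) (hA0 : ∀ i j, 0 ≤ A i j) (hA1 : ∀ i, ∑ j, A i j = 1)
    (pbar : Fin n → ℝ) (hpbar : ∀ i, 0 ≤ pbar i)
    (c : ℕ → Fin n → ℝ) (hc : ∀ t < T, ∀ i, 0 ≤ c t i)
    (pstar : ℕ → Fin n → ℝ)
    (hadm : AdmissibleVecSeq n T α A pbar c pstar)
    (hopt : ∀ q, AdmissibleVecSeq n T α A pbar c q →
      objVecSeq n T (coeff T α) q ≤ objVecSeq n T (coeff T α) pstar) :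
    ∀ t < T,
      (∀ i, 0 ≤ pstar t i) ∧
      (∀ i, pstar t i =
        min (nominalVec α pbar pstar t i)
          (c t i + worthVec A c pstar t i + Aᵀ.mulVec (pstar t) i)) := by
  exact Prorata.MAIN α A hα hA0 T pbar c hc pstar hadm hopt
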